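/- arXiv:1709.09907 — 4 statements merged into one kernel-verified Lean document; each statement's English description precedes it below -/
import Mathlib

section
/- Let t ∈ S'(R^N) be a tempered distribution with 0 ∉ supp t. Then the Steinmann scaling degree of t with respect to the origin equals −∞; that is, for every real s and every Schwartz function g, lim_{λ→0+} λ^s ∫ t(λx) g(x) dx = 0. -/
open MeasureTheory Filter Topology SchwartzMap

noncomputable section

abbrev Rn (N : ℕ) : Type := EuclideanSpace ℝ (Fin N)
abbrev TestFun (N : ℕ) := SchwartzMap (Rn N) ℂ
abbrev TDist (N : ℕ) := TestFun N →L[ℂ] ℂ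

/-- The continuous linear equivalence `x ↦ a • x` of a real normed space, for `a ≠ 0`. -/
def smulCLE (E : Type*) [NormedAddCommGroup E] [NormedSpace ℝ E] (a : ℝ) (ha : a ≠ 0) :
    E ≃L[ℝ] E :=
  { LinearEquiv.smulOfNeZero ℝ E a ha with
    continuous_toFun := continuous_const_smul a
    continuous_invFun := continuous_const_smul a⁻¹ }

/-- Composition with the dilation `x ↦ a • x` as a continuous linear map on Schwartz space
(defined to be `0` for `a = 0`).  `(scaleHomCLM E a g) x = g (a • x)` for `a ≠ 0`. -/
def scaleHomCLM (E : Type*) [NormedAddCommGroup E] [NormedSpace ℝ E] (a : ℝ) :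
    SchwartzMap E ℂ →L[ℂ] SchwartzMap E ℂ :=
  if ha : a = 0 then 0 else
    SchwartzMap.compCLMOfContinuousLinearEquiv ℂ (smulCLE E a ha)

/-- The set of real `s` such that `λ^s ⟨t(λ·), g⟩ = λ^s λ^{-K} ⟨t, g(·/λ)⟩ → 0` as `λ → 0⁺`
for every Schwartz `g`; its infimum is the Steinmann scaling degree.  Here `K` is the
dimension of the underlying space `E`. -/
def sdSet (E : Type*) [NormedAddCommGroup E] [NormedSpace ℝ E] (K : ℕ)
    (t : SchwartzMap E ℂ →L[ℂ] ℂ) : Set ℝ :=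
  {s : ℝ | ∀ g : SchwartzMap E ℂ,
    Tendsto (fun lam : ℝ => ((lam ^ s * (lam ^ K)⁻¹ : ℝ) : ℂ) * t (scaleHomCLM E lam⁻¹ g))
      (𝓝[>] (0:ℝ)) (𝓝 (0:ℂ))}

/-- The Steinmann scaling degree `sd(t) = inf { s | … } ∈ ℝ ∪ {±∞}`. -/
def scalingDegree (E : Type*) [NormedAddCommGroup E] [NormedSpace ℝ E] (K : ℕ)
    (t : SchwartzMap E ℂ →L[ℂ] ℂ) : EReal :=
  sInf ((fun s : ℝ => (s : EReal)) '' sdSet E K t)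

-- Lemma A: derivative of scaled function
lemma scale_deriv_bound {N : ℕ} (g : TestFun N) (c : ℝ) (j : ℕ) (x : Rn N) :
    ‖iteratedFDeriv ℝ j (fun y => g (c • y)) x‖ ≤ |c| ^ j * ‖iteratedFDeriv ℝ j (⇑g) (c • x)‖ := by
  set A : Rn N →L[ℝ] Rn N := c • ContinuousLinearMap.id ℝ (Rn N) with hA
  have hcomp : (fun y : Rn N => g (c • y)) = ⇑g ∘ ⇑A := by
    funext y; simp [hA]
  rw [hcomp, ContinuousLinearMap.iteratedFDeriv_comp_right A (g.smooth ⊤) x (by exact_mod_cast le_top)]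
  have hAx : A x = c • x := by simp [hA]
  rw [hAx]
  refine (ContinuousMultilinearMap.norm_compContinuousLinearMap_le _ _).trans ?_
  rw [Finset.prod_const, Finset.card_univ, Fintype.card_fin, mul_comm]
  have hAc : ‖A‖ ≤ |c| :=
    calc ‖A‖ ≤ ‖c‖ * ‖ContinuousLinearMap.id ℝ (Rn N)‖ := by rw [hA]; exact norm_smul_le c (ContinuousLinearMap.id ℝ (Rn N))
      _ ≤ |c| * 1 := by
          rw [Real.norm_eq_abs]
          exact mul_le_mul_of_nonneg_left ContinuousLinearMap.norm_id_le (abs_nonneg c)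
      _ = |c| := mul_one _
  exact mul_le_mul_of_nonneg_right (pow_le_pow_left₀ (norm_nonneg _) hAc j) (norm_nonneg _)

-- core decay estimate away from the origin
lemma core_est {N : ℕ} (g : TestFun N) (k m : ℕ) {l : ℝ} (hl0 : 0 < l) (hl1 : l ≤ 1)
    {rI : ℝ} (hrI : 0 < rI) {x : Rn N} (hx : rI ≤ ‖x‖) {i j n : ℕ} (hji : j + i = n) :
    ‖x‖ ^ k * ‖iteratedFDeriv ℝ j (fun y => g (l⁻¹ • y)) x‖ ≤
      SchwartzMap.seminorm ℝ (k + n + m) j g * (rI ^ (n + m))⁻¹ * l ^ m := by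
  have hxpos : (0:ℝ) < ‖x‖ := lt_of_lt_of_le hrI hx
  set a := ‖x‖ with ha
  set K := k + n + m with hK
  set P : ℝ := SchwartzMap.seminorm ℝ K j g with hP
  set D := ‖iteratedFDeriv ℝ j (⇑g) (l⁻¹ • x)‖ with hD
  set L := ‖iteratedFDeriv ℝ j (fun y => g (l⁻¹ • y)) x‖ with hL
  have h1 : L ≤ l⁻¹ ^ j * D := by
    have := scale_deriv_bound g l⁻¹ j x
    rwa [abs_of_pos (inv_pos.mpr hl0)] at this
  have h3 : ‖l⁻¹ • x‖ = l⁻¹ * a := by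
    rw [norm_smul, Real.norm_eq_abs, abs_of_pos (inv_pos.mpr hl0)]
  have h2 : (l⁻¹ * a) ^ K * D ≤ P := by
    have := SchwartzMap.le_seminorm ℝ K j g (l⁻¹ • x)
    rwa [h3] at this
  have hl0' : l ≠ 0 := ne_of_gt hl0
  have ha0 : a ≠ 0 := ne_of_gt hxpos
  have hq : (0:ℝ) < (l⁻¹ * a) ^ K := by positivity
  have hDle : D ≤ P * (l ^ K / a ^ K) := by
    have hD2 : D ≤ P / (l⁻¹ * a) ^ K := (le_div_iff₀ hq).mpr (by rw [mul_comm] at h2; exact h2)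
    refine hD2.trans (le_of_eq ?_)
    field_simp
    rw [div_pow, mul_assoc, div_mul_cancel₀ _ (pow_ne_zero _ hl0')]
  have hsplit : a ^ k * (l⁻¹ ^ j * (P * (l ^ K / a ^ K))) = P * (l ^ (k + i + m) / a ^ (n + m)) := by
    have e1 : l ^ K = l ^ j * l ^ (k + i + m) := by rw [← pow_add]; congr 1; omega
    have e2 : a ^ K = a ^ k * a ^ (n + m) := by rw [← pow_add]; congr 1; omega
    rw [e1, e2]
    field_simp
    ring
    rw [← mul_pow, mul_inv_cancel₀ hl0', one_pow, one_mul]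
  have h5 : l ^ (k + i + m) ≤ l ^ m := pow_le_pow_of_le_one hl0.le hl1 (by omega)
  have h6 : rI ^ (n + m) ≤ a ^ (n + m) := pow_le_pow_left₀ hrI.le hx _
  have hdiv : l ^ (k + i + m) / a ^ (n + m) ≤ l ^ m / rI ^ (n + m) := by
    apply div_le_div₀ (by positivity) h5 (by positivity) h6
  have hPnn : 0 ≤ P := apply_nonneg _ _
  calc a ^ k * L ≤ a ^ k * (l⁻¹ ^ j * D) := mul_le_mul_of_nonneg_left h1 (by positivity)
    _ ≤ a ^ k * (l⁻¹ ^ j * (P * (l ^ K / a ^ K))) := by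
        exact mul_le_mul_of_nonneg_left (mul_le_mul_of_nonneg_left hDle (by positivity)) (by positivity)
    _ = P * (l ^ (k + i + m) / a ^ (n + m)) := hsplit
    _ ≤ P * (l ^ m / rI ^ (n + m)) := mul_le_mul_of_nonneg_left hdiv hPnn
    _ = P * (rI ^ (n + m))⁻¹ * l ^ m := by rw [div_eq_mul_inv]; ring

lemma psi_deriv_bound {N : ℕ} (χ : ContDiffBump (0 : Rn N)) (i : ℕ) :
    ∃ B : ℝ, 0 ≤ B ∧ ∀ x : Rn N, ‖iteratedFDeriv ℝ i (fun y => (1:ℝ) - χ y) x‖ ≤ B := by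
  obtain ⟨B, hB⟩ := (χ.hasCompactSupport.iteratedFDeriv i).exists_bound_of_continuous
      ((χ.contDiff (n := ⊤)).continuous_iteratedFDeriv (by exact_mod_cast le_top))
  have hB0 : 0 ≤ B := (norm_nonneg _).trans (hB 0)
  refine ⟨1 + B, by positivity, fun x => ?_⟩
  have hdecomp : (fun y : Rn N => (1:ℝ) - χ y)
      = (fun _ : Rn N => (1:ℝ)) + (-⇑χ) := by
    funext y; simp [sub_eq_add_neg]
  have hadd : iteratedFDeriv ℝ i ((fun _ : Rn N => (1:ℝ)) + (-⇑χ)) x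
      = iteratedFDeriv ℝ i (fun _ : Rn N => (1:ℝ)) x + iteratedFDeriv ℝ i (-⇑χ) x :=
    iteratedFDeriv_add_apply contDiff_const.contDiffAt (χ.contDiff.neg.contDiffAt)
  rw [hdecomp, hadd]
  refine (norm_add_le _ _).trans ?_
  have hconst : ‖iteratedFDeriv ℝ i (fun _ : Rn N => (1:ℝ)) x‖ ≤ 1 := by
    cases i with
    | zero => rw [norm_iteratedFDeriv_zero]; simp
    | succ i => rw [iteratedFDeriv_const_of_ne (Nat.succ_ne_zero i)]; simp
  have hneg : ‖iteratedFDeriv ℝ i (-⇑χ) x‖ ≤ B := by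
    rw [iteratedFDeriv_neg_apply, norm_neg]; exact hB x
  linarith

lemma estB {N : ℕ} (g : TestFun N) (χ : ContDiffBump (0 : Rn N)) (k n m : ℕ) :
    ∃ C : ℝ, 0 ≤ C ∧ ∀ l : ℝ, 0 < l → l ≤ 1 → ∀ x : Rn N,
      ‖x‖ ^ k * ‖iteratedFDeriv ℝ n (fun y => ((1:ℝ) - χ y) • g (l⁻¹ • y)) x‖ ≤ C * l ^ m := by
  choose B hB0 hBb using psi_deriv_bound χ
  set C0 : ℝ := ∑ i ∈ Finset.range (n+1), (n.choose i : ℝ) * B i *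
      (SchwartzMap.seminorm ℝ (k+n+m) (n-i) g * (χ.rIn ^ (n+m))⁻¹) with hC0
  have hC0nn : 0 ≤ C0 := by
    apply Finset.sum_nonneg
    intro i _
    have hb1 := hB0 i
    have hb2 : (0:ℝ) ≤ SchwartzMap.seminorm ℝ (k+n+m) (n-i) g := apply_nonneg _ _
    have hr : (0:ℝ) < χ.rIn := χ.rIn_pos
    have hrp : (0:ℝ) ≤ (χ.rIn ^ (n+m))⁻¹ := by positivity
    exact mul_nonneg (mul_nonneg (Nat.cast_nonneg _) hb1) (mul_nonneg hb2 hrp)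
  refine ⟨C0, hC0nn, fun l hl0 hl1 x => ?_⟩
  have hψsm : ContDiff ℝ ((⊤ : ℕ∞) : WithTop ℕ∞) (fun y : Rn N => (1:ℝ) - χ y) :=
    contDiff_const.sub (χ.contDiff (n := ⊤))
  have hGsm : ContDiff ℝ ((⊤ : ℕ∞) : WithTop ℕ∞) (fun y : Rn N => g (l⁻¹ • y)) := by
    have h1 : ContDiff ℝ ((⊤ : ℕ∞) : WithTop ℕ∞) (fun y : Rn N => l⁻¹ • y) :=
      contDiff_id.const_smul l⁻¹
    exact (g.smooth ⊤).comp h1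
  by_cases hx : χ.rIn ≤ ‖x‖
  · calc ‖x‖ ^ k * ‖iteratedFDeriv ℝ n (fun y => ((1:ℝ) - χ y) • g (l⁻¹ • y)) x‖
        ≤ ‖x‖ ^ k * ∑ i ∈ Finset.range (n+1), (n.choose i : ℝ) *
            ‖iteratedFDeriv ℝ i (fun y : Rn N => (1:ℝ) - χ y) x‖ *
            ‖iteratedFDeriv ℝ (n-i) (fun y : Rn N => g (l⁻¹ • y)) x‖ := by
          exact mul_le_mul_of_nonneg_left
            (norm_iteratedFDeriv_smul_le hψsm hGsm x (by exact_mod_cast le_top))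
            (by positivity)
      _ = ∑ i ∈ Finset.range (n+1), (n.choose i : ℝ) *
            ‖iteratedFDeriv ℝ i (fun y : Rn N => (1:ℝ) - χ y) x‖ *
            (‖x‖ ^ k * ‖iteratedFDeriv ℝ (n-i) (fun y : Rn N => g (l⁻¹ • y)) x‖) := by
          rw [Finset.mul_sum]; exact Finset.sum_congr rfl fun i _ => by ring
      _ ≤ ∑ i ∈ Finset.range (n+1), (n.choose i : ℝ) * B i *
            (SchwartzMap.seminorm ℝ (k+n+m) (n-i) g * (χ.rIn ^ (n+m))⁻¹ * l ^ m) := by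
          apply Finset.sum_le_sum
          intro i hi
          have hin : i ≤ n := Nat.lt_succ_iff.mp (Finset.mem_range.mp hi)
          have hcore := core_est g k m hl0 hl1 χ.rIn_pos hx (i := i) (j := n - i) (n := n) (by omega)
          have hBi := hBb i x
          have h1nn : (0:ℝ) ≤ ‖x‖ ^ k * ‖iteratedFDeriv ℝ (n-i) (fun y : Rn N => g (l⁻¹ • y)) x‖ := by positivity
          calc (n.choose i : ℝ) * ‖iteratedFDeriv ℝ i (fun y : Rn N => (1:ℝ) - χ y) x‖ *
                (‖x‖ ^ k * ‖iteratedFDeriv ℝ (n-i) (fun y : Rn N => g (l⁻¹ • y)) x‖)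
              ≤ (n.choose i : ℝ) * B i *
                (‖x‖ ^ k * ‖iteratedFDeriv ℝ (n-i) (fun y : Rn N => g (l⁻¹ • y)) x‖) := by
                apply mul_le_mul_of_nonneg_right _ h1nn
                exact mul_le_mul_of_nonneg_left hBi (by positivity)
            _ ≤ (n.choose i : ℝ) * B i *
                (SchwartzMap.seminorm ℝ (k+n+m) (n-i) g * (χ.rIn ^ (n+m))⁻¹ * l ^ m) := by
                apply mul_le_mul_of_nonneg_left hcore
                have := hB0 i
                positivity
      _ = C0 * l ^ m := by
          rw [hC0, Finset.sum_mul]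
          exact Finset.sum_congr rfl fun i _ => by ring
  · push_neg at hx
    have hzero : iteratedFDeriv ℝ n (fun y => ((1:ℝ) - χ y) • g (l⁻¹ • y)) x = 0 := by
      by_contra hne
      have hmem : x ∈ tsupport (fun y => ((1:ℝ) - χ y) • g (l⁻¹ • y)) :=
        support_iteratedFDeriv_subset n (by simpa [Function.mem_support] using hne)
      have hsub : tsupport (fun y : Rn N => ((1:ℝ) - χ y) • g (l⁻¹ • y))
          ⊆ {y : Rn N | χ.rIn ≤ ‖y‖} := by
        apply closure_minimal
        · intro y hy
          simp only [Function.mem_support] at hy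
          simp only [Set.mem_setOf_eq]
          by_contra hlt
          push_neg at hlt
          have : χ y = 1 := χ.one_of_mem_closedBall
            (by simpa [Metric.mem_closedBall, dist_zero_right] using hlt.le)
          apply hy
          rw [this]
          simp
        · exact isClosed_le continuous_const continuous_norm
      exact absurd (hsub hmem) (not_le.mpr hx)
    rw [hzero, norm_zero, mul_zero]
    positivity

lemma exists_cut {N : ℕ} (g : TestFun N) (χ : ContDiffBump (0 : Rn N)) {l : ℝ}
    (hl0 : 0 < l) (hl1 : l ≤ 1) :
    ∃ h : TestFun N, ⇑h = fun y => ((1:ℝ) - χ y) • g (l⁻¹ • y) := by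
  refine ⟨⟨fun y => ((1:ℝ) - χ y) • g (l⁻¹ • y), ?_, ?_⟩, rfl⟩
  · have hψsm : ContDiff ℝ ((⊤ : ℕ∞) : WithTop ℕ∞) (fun y : Rn N => (1:ℝ) - χ y) :=
      contDiff_const.sub (χ.contDiff (n := ⊤))
    have h1 : ContDiff ℝ ((⊤ : ℕ∞) : WithTop ℕ∞) (fun y : Rn N => l⁻¹ • y) :=
      contDiff_id.const_smul l⁻¹
    exact hψsm.smul ((g.smooth ⊤).comp h1)
  · intro k n
    obtain ⟨C, hC0, hC⟩ := estB g χ k n 0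
    exact ⟨C, fun x => by simpa using hC l hl0 hl1 x⟩

/-- If `t ∈ S'(ℝ^N)` satisfies `0 ∉ supp t`, then its Steinmann scaling
degree with respect to the origin is `−∞`: every real `s` belongs to the defining set,
i.e. for every `s` and every Schwartz `g`, `lim_{λ→0⁺} λ^s ∫ t(λx) g(x) dx = 0`. -/
theorem scalingDegree_eq_bot_of_notMem_support {N : ℕ} (t : TDist N)
    (h0 : ∃ U ∈ 𝓝 (0 : Rn N), ∀ g : TestFun N, tsupport ⇑g ⊆ U → t g = 0) :
    (∀ s : ℝ, s ∈ sdSet (Rn N) N t) ∧ scalingDegree (Rn N) N t = ⊥ := by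
  obtain ⟨U, hU, hUt⟩ := h0
  obtain ⟨ε, hε, hball⟩ := Metric.mem_nhds_iff.mp hU
  set r : ℝ := ε / 2 with hr
  have hr0 : 0 < r := by positivity
  set χ : ContDiffBump (0 : Rn N) := ⟨r/2, r, by positivity, by simp [hr]; linarith⟩ with hχ
  have hχU : Metric.closedBall (0 : Rn N) r ⊆ U := fun y hy =>
    hball (by simp only [Metric.mem_ball]; exact lt_of_le_of_lt (Metric.mem_closedBall.mp hy) (by simp [hr]; linarith))
  -- bound for t
  obtain ⟨F, Ct, hCt0, hCt⟩ := Seminorm.bound_of_continuous (schwartz_withSeminorms ℂ (Rn N) ℂ)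
    ((normSeminorm ℂ ℂ).comp t.toLinearMap) (t.continuous.norm)
  have hmem : ∀ s : ℝ, s ∈ sdSet (Rn N) N t := by
    intro s g
    set m : ℕ := ⌈(N:ℝ) - s⌉₊ + 1 with hm
    choose Cb hCb0 hCb using fun p : ℕ × ℕ => estB g χ p.1 p.2 m
    set A : ℝ := ∑ p ∈ F, Cb p with hA
    have hA0 : 0 ≤ A := Finset.sum_nonneg fun p _ => hCb0 p
    set M : ℝ := (Ct : ℝ) * A with hM
    have hM0 : 0 ≤ M := mul_nonneg (Ct.coe_nonneg) hA0
    rw [tendsto_zero_iff_norm_tendsto_zero]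
    apply squeeze_zero' (.of_forall fun _ => norm_nonneg _)
      (g := fun l : ℝ => M * l)
    · filter_upwards [Ioc_mem_nhdsGT_of_mem (show (0:ℝ) ∈ Set.Ico (0:ℝ) 1 from ⟨le_rfl, one_pos⟩)]
        with l hl
      obtain ⟨hl0, hl1⟩ := hl
      obtain ⟨h, hh⟩ := exists_cut g χ hl0 hl1
      have hlne : l ≠ 0 := ne_of_gt hl0
      have hne : l⁻¹ ≠ 0 := inv_ne_zero hlne
      have hGco : ⇑(scaleHomCLM (Rn N) l⁻¹ g) = fun y => g (l⁻¹ • y) := by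
        simp only [scaleHomCLM, dif_neg hne, compCLMOfContinuousLinearEquiv_apply]
        rfl
      -- t applied equals t h
      have hts : t (scaleHomCLM (Rn N) l⁻¹ g) = t h := by
        have hco : ⇑(scaleHomCLM (Rn N) l⁻¹ g - h) = fun y => χ y • g (l⁻¹ • y) := by
          funext y
          have h1 : (scaleHomCLM (Rn N) l⁻¹ g - h) y
              = (scaleHomCLM (Rn N) l⁻¹ g) y - h y := rfl
          rw [h1, congrFun hGco y, congrFun hh y]
          rw [sub_smul, one_smul]
          abel
        have hdiff : t (scaleHomCLM (Rn N) l⁻¹ g - h) = 0 := by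
          apply hUt
          rw [hco]
          have hsubsupp : Function.support (fun y : Rn N => χ y • g (l⁻¹ • y))
              ⊆ Function.support ⇑χ := by
            intro y hy
            simp only [Function.mem_support] at hy ⊢
            exact fun hz => hy (by rw [hz, zero_smul])
          calc tsupport (fun y : Rn N => χ y • g (l⁻¹ • y))
              ⊆ tsupport ⇑χ := closure_mono hsubsupp
            _ = Metric.closedBall 0 r := χ.tsupport_eq
            _ ⊆ U := hχU
        have := map_sub t (scaleHomCLM (Rn N) l⁻¹ g) h
        rw [hdiff] at this
        exact sub_eq_zero.mp this.symm
      -- seminorm bound for h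
      have hsem : ∀ p ∈ F, schwartzSeminormFamily ℂ (Rn N) ℂ p h ≤ A * l ^ m := by
        intro p hp
        have hb : SchwartzMap.seminorm ℂ p.1 p.2 h ≤ Cb p * l ^ m := by
          apply SchwartzMap.seminorm_le_bound
          · have := hCb p l hl0 hl1 0
            exact le_trans (by positivity) this
          · intro x
            rw [hh]
            exact hCb p l hl0 hl1 x
        refine hb.trans ?_
        exact mul_le_mul_of_nonneg_right
          (Finset.single_le_sum (fun q _ => hCb0 q) hp) (by positivity)
      have hsup : (F.sup (schwartzSeminormFamily ℂ (Rn N) ℂ)) h ≤ A * l ^ m :=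
        Seminorm.finset_sup_apply_le (by positivity) hsem
      have htb : ‖t h‖ ≤ (Ct : ℝ) * (A * l ^ m) := by
        have h2 := hCt h
        simp only [Seminorm.comp_apply, Seminorm.smul_apply, coe_normSeminorm,
          ContinuousLinearMap.coe_coe, NNReal.smul_def, smul_eq_mul] at h2
        exact h2.trans (mul_le_mul_of_nonneg_left hsup Ct.coe_nonneg)
      -- positivity of prefactor
      have hp1 : (0:ℝ) < l ^ s := Real.rpow_pos_of_pos hl0 s
      have hp2 : (0:ℝ) < ((l:ℝ) ^ N)⁻¹ := by positivity
      have hval : ‖((l ^ s * (l ^ N)⁻¹ : ℝ) : ℂ) * t (scaleHomCLM (Rn N) l⁻¹ g)‖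
          = (l ^ s * (l ^ N)⁻¹) * ‖t h‖ := by
        rw [hts, norm_mul, Complex.norm_real, Real.norm_eq_abs,
          abs_of_pos (mul_pos hp1 hp2)]
      have hkey : l ^ s * ((l:ℝ) ^ N)⁻¹ * l ^ (m:ℕ) ≤ l := by
        have e : l ^ s * ((l:ℝ) ^ N)⁻¹ * l ^ (m:ℕ) = l ^ (s - N + m) := by
          rw [show s - (N:ℝ) + m = s + (-(N:ℝ)) + m by ring, Real.rpow_add hl0,
            Real.rpow_add hl0, Real.rpow_neg hl0.le, Real.rpow_natCast, Real.rpow_natCast]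
        rw [e]
        have hce := Nat.le_ceil ((N:ℝ) - s)
        have hmr : ((m:ℝ)) = (⌈(N:ℝ) - s⌉₊ : ℝ) + 1 := by rw [hm]; push_cast; ring
        have h1e : (1:ℝ) ≤ s - N + m := by rw [hmr]; linarith
        calc l ^ (s - N + m) ≤ l ^ (1:ℝ) :=
              Real.rpow_le_rpow_of_exponent_ge hl0 hl1 h1e
          _ = l := Real.rpow_one l
      calc ‖((l ^ s * (l ^ N)⁻¹ : ℝ) : ℂ) * t (scaleHomCLM (Rn N) l⁻¹ g)‖
          = (l ^ s * (l ^ N)⁻¹) * ‖t h‖ := hval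
        _ ≤ (l ^ s * (l ^ N)⁻¹) * ((Ct : ℝ) * (A * l ^ m)) :=
            mul_le_mul_of_nonneg_left htb (le_of_lt (mul_pos hp1 hp2))
        _ = M * (l ^ s * ((l:ℝ) ^ N)⁻¹ * l ^ m) := by rw [hM]; ring
        _ ≤ M * l := mul_le_mul_of_nonneg_left hkey hM0
    · have : Tendsto (fun l : ℝ => M * l) (𝓝 0) (𝓝 (M * 0)) :=
        (continuous_const.mul continuous_id).tendsto 0
      rw [mul_zero] at this
      exact this.mono_left nhdsWithin_le_nhds
  refine ⟨hmem, ?_⟩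
  rw [scalingDegree, sInf_eq_bot]
  intro b hb
  obtain ⟨y, _, hy2⟩ := EReal.exists_between_coe_real hb
  exact ⟨y, ⟨y, hmem y, rfl⟩, hy2⟩
end
end

section
/- If t ∈ S'(R^N) is homogeneous of degree d (i.e. t(λx) = λ^d t(x) for all λ > 0), then the Steinmann scaling degree of t equals −d. -/
open MeasureTheory Filter Topology SchwartzMap

noncomputable section

/-- If `t ∈ S'(ℝ^N)` is a nonzero homogeneous distribution of degree `d`,
i.e. `⟨t, g(·/λ)⟩ = λ^{N+d} ⟨t, g⟩` for all `λ > 0`, then its Steinmann scaling degree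
equals `−d`. -/
theorem scalingDegree_of_homogeneous {N : ℕ} (t : TDist N) (d : ℝ) (ht : t ≠ 0)
    (hhom : ∀ lam : ℝ, 0 < lam → ∀ g : TestFun N,
      t (scaleHomCLM (Rn N) lam⁻¹ g) = ((lam ^ ((N : ℝ) + d) : ℝ) : ℂ) * t g) :
    scalingDegree (Rn N) N t = ((-d : ℝ) : EReal) := by
  -- key pointwise identity
  have key : ∀ s : ℝ, ∀ g : TestFun N, ∀ lam : ℝ, 0 < lam →
      ((lam ^ s * (lam ^ N)⁻¹ : ℝ) : ℂ) * t (scaleHomCLM (Rn N) lam⁻¹ g)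
        = ((lam ^ (s + d) : ℝ) : ℂ) * t g := by
    intro s g lam hlam
    rw [hhom lam hlam g, ← mul_assoc, ← Complex.ofReal_mul]
    congr 2
    rw [← Real.rpow_natCast lam N, ← Real.rpow_neg hlam.le,
      ← Real.rpow_add hlam, ← Real.rpow_add hlam]
    ring_nf
  -- characterize sdSet
  have hset : sdSet (Rn N) N t = Set.Ioi (-d) := by
    ext s
    constructor
    · intro hs
      by_contra hcon
      rw [Set.mem_Ioi, not_lt] at hcon
      obtain ⟨g, hg⟩ := DFunLike.ne_iff.mp ht
      have hg' : t g ≠ 0 := by simpa using hg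
      have h1 : ∀ᶠ lam : ℝ in 𝓝[>] (0:ℝ),
          ‖((lam ^ s * (lam ^ N)⁻¹ : ℝ) : ℂ) * t (scaleHomCLM (Rn N) lam⁻¹ g)‖ < ‖t g‖ := by
        have h := (hs g).norm
        rw [norm_zero] at h
        exact h.eventually_lt_const (norm_pos_iff.mpr hg')
      have h2 : ∀ᶠ lam : ℝ in 𝓝[>] (0:ℝ),
          ¬ ‖((lam ^ s * (lam ^ N)⁻¹ : ℝ) : ℂ) * t (scaleHomCLM (Rn N) lam⁻¹ g)‖ < ‖t g‖ := by
        filter_upwards [Ioc_mem_nhdsGT_of_mem (by norm_num : (0:ℝ) ∈ Set.Ico 0 1)]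
          with lam hlam
        obtain ⟨hlam0, hlam1⟩ := hlam
        rw [key s g lam hlam0, not_lt, norm_mul, Complex.norm_real,
          Real.norm_of_nonneg (Real.rpow_nonneg hlam0.le _)]
        have : (1:ℝ) ≤ lam ^ (s + d) :=
          Real.one_le_rpow_of_pos_of_le_one_of_nonpos hlam0 hlam1 (by linarith)
        nlinarith [norm_nonneg (t g)]
      obtain ⟨lam, hl1, hl2⟩ := (h1.and h2).exists
      exact hl2 hl1
    · intro hs g
      have hpos : 0 < s + d := by simpa [Set.mem_Ioi] using by linarith [Set.mem_Ioi.mp hs]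
      have hr : Tendsto (fun lam : ℝ => lam ^ (s + d)) (𝓝[>] (0:ℝ)) (𝓝 0) := by
        have := (Real.continuousAt_rpow_const 0 (s + d)
          (Or.inr hpos.le)).continuousWithinAt (s := Set.Ioi 0)
        simpa [Real.zero_rpow hpos.ne', ContinuousWithinAt] using this
      have : Tendsto (fun lam : ℝ => ((lam ^ (s + d) : ℝ) : ℂ) * t g)
          (𝓝[>] (0:ℝ)) (𝓝 0) := by
        have := ((Complex.continuous_ofReal.tendsto 0).comp hr).mul_const (t g)
        simpa using this
      refine this.congr' ?_
      filter_upwards [self_mem_nhdsWithin] with lam hlam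
      exact (key s g lam hlam).symm
  -- compute infimum
  rw [scalingDegree, hset]
  apply le_antisymm
  · rw [← EReal.le_of_forall_lt_iff_le]
    intro z hz
    apply sInf_le
    exact ⟨z, by simpa [Set.mem_Ioi] using EReal.coe_lt_coe_iff.mp hz, rfl⟩
  · apply le_sInf
    rintro x ⟨y, hy, rfl⟩
    exact EReal.coe_le_coe_iff.mpr (Set.mem_Ioi.mp hy).le
end
end

section
/- For any tempered distribution t ∈ S'(R^N) and any multi-index α, the Steinmann scaling degree satisfies sd(∂^α t) ≤ sd(t) + |α|. -/
open MeasureTheory Filter Topology SchwartzMap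

noncomputable section

lemma scaleHomCLM_apply {E : Type*} [NormedAddCommGroup E] [NormedSpace ℝ E] {a : ℝ}
    (ha : a ≠ 0) (g : SchwartzMap E ℂ) (x : E) :
    scaleHomCLM E a g x = g (a • x) := by
  simp [scaleHomCLM, ha, smulCLE]
  rfl

lemma pderiv_scale {E : Type*} [NormedAddCommGroup E] [NormedSpace ℝ E] {a : ℝ}
    (ha : a ≠ 0) (v : E) (g : SchwartzMap E ℂ) :
    LineDeriv.lineDerivOpCLM ℂ (SchwartzMap E ℂ) v (scaleHomCLM E a g) =
      a • scaleHomCLM E a (LineDeriv.lineDerivOpCLM ℂ (SchwartzMap E ℂ) v g) := by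
  ext x
  have h1 : (scaleHomCLM E a g : E → ℂ) = fun z => g (a • z) := by
    funext z; exact scaleHomCLM_apply ha g z
  have hs : HasFDerivAt (fun z : E => a • z) ((smulCLE E a ha : E →L[ℝ] E)) x :=
    (smulCLE E a ha : E →L[ℝ] E).hasFDerivAt
  have hg' : HasFDerivAt (g : E → ℂ) (fderiv ℝ (g : E → ℂ) (a • x)) (a • x) :=
    g.differentiableAt.hasFDerivAt
  have hcomp : HasFDerivAt (fun z : E => g (a • z))
      ((fderiv ℝ (g : E → ℂ) (a • x)).comp (smulCLE E a ha : E →L[ℝ] E)) x :=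
    hg'.comp x hs
  calc LineDeriv.lineDerivOpCLM ℂ (SchwartzMap E ℂ) v (scaleHomCLM E a g) x
      = fderiv ℝ (scaleHomCLM E a g : E → ℂ) x v := by rw [LineDeriv.lineDerivOpCLM_apply, SchwartzMap.lineDerivOp_apply_eq_fderiv]
    _ = fderiv ℝ (fun z : E => g (a • z)) x v := by rw [h1]
    _ = a • fderiv ℝ (g : E → ℂ) (a • x) v := by
        rw [hcomp.fderiv]
        have : (smulCLE E a ha : E →L[ℝ] E) v = a • v := rfl
        simp only [ContinuousLinearMap.comp_apply, this, _root_.map_smul]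
    _ = (a • scaleHomCLM E a (LineDeriv.lineDerivOpCLM ℂ (SchwartzMap E ℂ) v g)) x := by
        rw [SchwartzMap.smul_apply, scaleHomCLM_apply ha, LineDeriv.lineDerivOpCLM_apply,
          SchwartzMap.lineDerivOp_apply_eq_fderiv]

/-- Iterated partial derivative `∂^α` on Schwartz functions, for a multi-index `α`. -/
def pderivMulti (N : ℕ) (α : Fin N → ℕ) : TestFun N →L[ℂ] TestFun N :=
  (List.ofFn fun i => (LineDeriv.lineDerivOpCLM ℂ (TestFun N) (EuclideanSpace.single i (1:ℝ))) ^ (α i)).prod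

/-- `D` commutes with dilation up to factor `a ^ k`. -/
def CommDeg {N : ℕ} (D : TestFun N →L[ℂ] TestFun N) (k : ℕ) : Prop :=
  ∀ (a : ℝ), a ≠ 0 → ∀ g : TestFun N,
    D (scaleHomCLM (Rn N) a g) = a ^ k • scaleHomCLM (Rn N) a (D g)

lemma commDeg_one {N : ℕ} : CommDeg (1 : TestFun N →L[ℂ] TestFun N) 0 := by
  intro a ha g; simp

lemma commDeg_mul {N : ℕ} {D D' : TestFun N →L[ℂ] TestFun N} {k k' : ℕ}
    (h : CommDeg D k) (h' : CommDeg D' k') : CommDeg (D * D') (k + k') := by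
  intro a ha g
  simp only [ContinuousLinearMap.mul_apply]
  rw [h' a ha g, ContinuousLinearMap.map_smul_of_tower, h a ha, smul_smul, pow_add,
    mul_comm]

lemma commDeg_pow {N : ℕ} {D : TestFun N →L[ℂ] TestFun N} {k : ℕ}
    (h : CommDeg D k) (n : ℕ) : CommDeg (D ^ n) (n * k) := by
  induction n with
  | zero => simpa using commDeg_one
  | succ n ih =>
      have := commDeg_mul ih h
      rw [← pow_succ] at this
      simpa [Nat.succ_mul] using this

lemma commDeg_ofFn {N n : ℕ} (f : Fin n → (TestFun N →L[ℂ] TestFun N)) (k : Fin n → ℕ)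
    (h : ∀ i, CommDeg (f i) (k i)) : CommDeg (List.ofFn f).prod (∑ i, k i) := by
  induction n with
  | zero => simpa using commDeg_one
  | succ n ih =>
      rw [List.ofFn_succ, List.prod_cons, Fin.sum_univ_succ]
      exact commDeg_mul (h 0) (ih _ _ fun i => h i.succ)

lemma commDeg_pderivMulti {N : ℕ} (α : Fin N → ℕ) :
    CommDeg (pderivMulti N α) (∑ i, α i) := by
  unfold pderivMulti
  refine commDeg_ofFn _ _ fun i => ?_
  have h1 : CommDeg (LineDeriv.lineDerivOpCLM ℂ (TestFun N) (EuclideanSpace.single i (1:ℝ))) 1 := by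
    intro a ha g
    simpa using pderiv_scale ha (EuclideanSpace.single i (1:ℝ)) g
  simpa using commDeg_pow h1 (α i)

/-- The distributional derivative `∂^α t`, `⟨∂^α t, g⟩ = (-1)^{|α|} ⟨t, ∂^α g⟩`. -/
def distDeriv {N : ℕ} (α : Fin N → ℕ) (t : TDist N) : TDist N :=
  ((-1 : ℂ) ^ (∑ i, α i)) • (t.comp (pderivMulti N α))

lemma mem_sdSet_distDeriv {N : ℕ} (t : TDist N) (α : Fin N → ℕ) {s : ℝ}
    (hs : s ∈ sdSet (Rn N) N t) :
    s + (∑ i, α i : ℕ) ∈ sdSet (Rn N) N (distDeriv α t) := by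
  set m := ∑ i, α i with hm
  intro g
  have hlim := hs (pderivMulti N α g)
  have h0 : ((-1 : ℂ) ^ m) * (0 : ℂ) = 0 := by ring
  refine Tendsto.congr' ?_ (h0 ▸ hlim.const_mul ((-1 : ℂ) ^ m))
  filter_upwards [self_mem_nhdsWithin] with lam (hlam : 0 < lam)
  have hlam' : lam ≠ 0 := ne_of_gt hlam
  have hinv : lam⁻¹ ≠ 0 := inv_ne_zero hlam'
  have hc : pderivMulti N α (scaleHomCLM (Rn N) lam⁻¹ g) =
      (lam⁻¹) ^ m • scaleHomCLM (Rn N) lam⁻¹ (pderivMulti N α g) :=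
    commDeg_pderivMulti α lam⁻¹ hinv g
  have happ : distDeriv α t (scaleHomCLM (Rn N) lam⁻¹ g) =
      ((-1 : ℂ) ^ m) * (((lam⁻¹ ^ m : ℝ) : ℂ) *
        t (scaleHomCLM (Rn N) lam⁻¹ (pderivMulti N α g))) := by
    simp only [distDeriv, ContinuousLinearMap.smul_apply, ContinuousLinearMap.comp_apply, hc,
      ContinuousLinearMap.map_smul_of_tower, smul_eq_mul, Complex.real_smul, ← hm]
    try ring
  have hrpow : lam ^ (s + (m : ℝ)) = lam ^ s * lam ^ m := by
    rw [Real.rpow_add hlam, Real.rpow_natCast]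
  have hcancel : (lam : ℝ) ^ m * lam⁻¹ ^ m = 1 := by
    rw [← mul_pow, mul_inv_cancel₀ hlam', one_pow]
  have hccancel : ((lam : ℂ)) ^ m * ((lam : ℂ))⁻¹ ^ m = 1 := by
    rw [← mul_pow, mul_inv_cancel₀ (by exact_mod_cast hlam'), one_pow]
  set X := t (scaleHomCLM (Rn N) lam⁻¹ (pderivMulti N α g)) with hX
  rw [happ]
  push_cast [hrpow]
  field_simp
  linear_combination (-(((lam : ℝ) ^ s : ℝ) : ℂ) * X * ((lam : ℂ))⁻¹ ^ N) *
    hccancel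

/-- For any tempered distribution `t ∈ S'(ℝ^N)` and any multi-index `α`,
the Steinmann scaling degree satisfies `sd(∂^α t) ≤ sd(t) + |α|`. -/
theorem scalingDegree_distDeriv_le {N : ℕ} (t : TDist N) (α : Fin N → ℕ) :
    scalingDegree (Rn N) N (distDeriv α t) ≤
      scalingDegree (Rn N) N t + ((∑ i, α i : ℕ) : EReal) := by
  set m := ∑ i, α i with hm
  set c : EReal := ((m : ℝ) : EReal) with hc
  have hceq : ((m : ℕ) : EReal) = c := by
    rw [hc]; norm_cast
  rw [hceq]
  unfold scalingDegree
  rw [← EReal.sub_le_iff_le_add (Or.inl (EReal.coe_ne_bot _)) (Or.inl (EReal.coe_ne_top _))]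
  refine le_sInf fun x hx => ?_
  obtain ⟨s, hs, rfl⟩ := hx
  rw [EReal.sub_le_iff_le_add (Or.inl (EReal.coe_ne_bot _)) (Or.inl (EReal.coe_ne_top _))]
  have hmem : s + (m : ℝ) ∈ sdSet (Rn N) N (distDeriv α t) := mem_sdSet_distDeriv t α hs
  have : ((s + (m : ℝ) : ℝ) : EReal) ∈ (fun s : ℝ => (s : EReal)) '' sdSet (Rn N) N (distDeriv α t) :=
    ⟨_, hmem, rfl⟩
  have h := sInf_le this
  rw [EReal.coe_add] at h
  exact h
end
end

section
/- Let Γ⁻_{n,m} ⊂ R^{4n} × R^{4m} be the set of (y_1,…,y_n; x_1,…,x_m) such that there exists a function u : {1,…,n} → {1,…,m} with y_j ∈ x_{u(j)} − V̄⁺ for all j (each y_j lies in the causal past of some x_{u(j)}), where V̄⁺ = {p ∈ R^4 : p² ≥ 0, p⁰ ≥ 0} is the closed forward light cone in Minkowski space. Then the intersection of Γ⁻_{n,m} with the region {(y,x) : y_1⁰ + … + y_n⁰ + (1/(3n))|(y_1,…,y_n)| ≥ 0} is contained in {(y,x) : |(y_1,…,y_n)| ≤ C·|(x_1,…,x_m)|}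 for some constant C depending only on n and m, where |·| denotes the Euclidean norm of the concatenated vector. -/
noncomputable section

abbrev R4 : Type := EuclideanSpace ℝ (Fin 4)

/-- The Minkowski square `p² = (p⁰)² − (p¹)² − (p²)² − (p³)²`. -/
def minkSq (p : R4) : ℝ := p 0 ^ 2 - p 1 ^ 2 - p 2 ^ 2 - p 3 ^ 2

/-- The Euclidean norm of a concatenated vector `(y₁,…,y_n) ∈ ℝ^{4n}`. -/
def concatNorm {n : ℕ} (y : Fin n → R4) : ℝ := Real.sqrt (∑ j, ‖y j‖ ^ 2)

lemma coord_le_norm (p : R4) (i : Fin 4) : |p i| ≤ ‖p‖ := by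
  rw [EuclideanSpace.norm_eq]
  have h : |p i| ^ 2 ≤ ∑ k, ‖p k‖ ^ 2 := by
    have := Finset.single_le_sum (f := fun k => ‖p k‖ ^ 2) (fun k _ => by positivity)
      (Finset.mem_univ i)
    simpa [Real.norm_eq_abs] using this
  calc |p i| = Real.sqrt (|p i| ^ 2) := by rw [Real.sqrt_sq (abs_nonneg _)]
  _ ≤ _ := Real.sqrt_le_sqrt h

lemma norm_le_two_time (p : R4) (h1 : 0 ≤ minkSq p) (h2 : 0 ≤ p 0) : ‖p‖ ≤ 2 * p 0 := by
  have hsq : ‖p‖ ^ 2 = ∑ i, ‖p i‖ ^ 2 := by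
    rw [EuclideanSpace.norm_eq, Real.sq_sqrt (by positivity)]
  rw [Fin.sum_univ_four] at hsq
  simp only [Real.norm_eq_abs, sq_abs] at hsq
  unfold minkSq at h1
  nlinarith [norm_nonneg p]

lemma norm_le_concat {k : ℕ} (x : Fin k → R4) (i : Fin k) : ‖x i‖ ≤ concatNorm x := by
  unfold concatNorm
  have h : ‖x i‖ ^ 2 ≤ ∑ j, ‖x j‖ ^ 2 :=
    Finset.single_le_sum (f := fun j => ‖x j‖ ^ 2) (fun j _ => by positivity) (Finset.mem_univ i)
  calc ‖x i‖ = Real.sqrt (‖x i‖ ^ 2) := by rw [Real.sqrt_sq (norm_nonneg _)]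
  _ ≤ _ := Real.sqrt_le_sqrt h

lemma concat_le_sum {k : ℕ} (y : Fin k → R4) : concatNorm y ≤ ∑ j, ‖y j‖ := by
  unfold concatNorm
  have h : ∑ j, ‖y j‖ ^ 2 ≤ (∑ j, ‖y j‖) ^ 2 :=
    Finset.sum_sq_le_sq_sum_of_nonneg (fun j _ => norm_nonneg _)
  calc Real.sqrt (∑ j, ‖y j‖ ^ 2) ≤ Real.sqrt ((∑ j, ‖y j‖) ^ 2) := Real.sqrt_le_sqrt h
  _ = ∑ j, ‖y j‖ := Real.sqrt_sq (Finset.sum_nonneg fun j _ => norm_nonneg _)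


/-- The intersection of the cone `Γ⁻_{n,m}` (each `y_j` lies in the causal
past of some `x_{u(j)}`) with the region `{y₁⁰+…+y_n⁰ + (1/(3n))|(y₁,…,y_n)| ≥ 0}` is
contained in `{|(y₁,…,y_n)| ≤ C |(x₁,…,x_m)|}` for some constant `C` depending only on
`n` and `m`. -/
theorem cone_intersection_estimate (n m : ℕ) :
    ∃ C : ℝ, ∀ (y : Fin n → R4) (x : Fin m → R4) (u : Fin n → Fin m),
      (∀ j, 0 ≤ minkSq (x (u j) - y j) ∧ 0 ≤ (x (u j) - y j) 0) →
      0 ≤ (∑ j, y j 0) + (1 / (3 * (n : ℝ))) * concatNorm y →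
      concatNorm y ≤ C * concatNorm x := by
  refine ⟨3 * n * (2 * n + 1), ?_⟩
  intro y x u hcone hsum
  rcases Nat.eq_zero_or_pos n with hn | hn
  · subst hn
    have hY : concatNorm y = 0 := by simp [concatNorm]
    rw [hY]
    norm_num
  set X := concatNorm x with hXdef
  set Y := concatNorm y with hYdef
  have hX0 : 0 ≤ X := Real.sqrt_nonneg _
  have hY0 : 0 ≤ Y := Real.sqrt_nonneg _
  have hnR : (1:ℝ) ≤ n := by exact_mod_cast hn
  have hnne : (n:ℝ) ≠ 0 := by positivity
  have hXi : ∀ i, ‖x i‖ ≤ X := norm_le_concat x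
  have hsubapp : ∀ j, (x (u j) - y j) 0 = x (u j) 0 - y j 0 := fun j => rfl
  have hx0 : ∀ j, x (u j) 0 ≤ X := fun j =>
    le_trans (le_trans (le_abs_self _) (coord_le_norm _ 0)) (hXi _)
  have hyx : ∀ j, y j 0 ≤ X := by
    intro j
    have h0 := (hcone j).2
    rw [hsubapp j] at h0
    linarith [hx0 j]
  have hny : ∀ j, ‖y j‖ ≤ 3 * X - 2 * y j 0 := by
    intro j
    have h1 := norm_le_two_time _ (hcone j).1 (hcone j).2
    rw [hsubapp j] at h1
    have h2 : ‖y j‖ ≤ ‖x (u j)‖ + ‖x (u j) - y j‖ := by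
      calc ‖y j‖ = ‖x (u j) - (x (u j) - y j)‖ := by rw [sub_sub_cancel]
      _ ≤ _ := norm_sub_le _ _
    linarith [hXi (u j), hx0 j]
  have hneg : ∀ j, -(y j 0) ≤ ((n:ℝ) - 1) * X + 1 / (3 * (n:ℝ)) * Y := by
    intro j
    have hsplit : (∑ k, y k 0) = y j 0 + ∑ k ∈ Finset.univ.erase j, y k 0 :=
      (Finset.add_sum_erase _ _ (Finset.mem_univ j)).symm
    have hbound : ∑ k ∈ Finset.univ.erase j, y k 0 ≤ ((n:ℝ) - 1) * X := by
      have := Finset.sum_le_card_nsmul (Finset.univ.erase j) (fun k => y k 0) X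
        (fun k _ => hyx k)
      have hcard : (Finset.univ.erase j).card = n - 1 := by
        simp [Finset.card_erase_of_mem]
      rw [hcard] at this
      rw [nsmul_eq_mul] at this
      have : ((n - 1 : ℕ) : ℝ) * X ≤ ((n:ℝ) - 1) * X := by
        apply mul_le_mul_of_nonneg_right _ hX0
        push_cast [Nat.cast_sub hn]
        linarith
      linarith [Finset.sum_le_card_nsmul (Finset.univ.erase j) (fun k => y k 0) X
        (fun k _ => hyx k), this]
    rw [hsplit] at hsum
    linarith
  have hYb : Y ≤ ∑ _j : Fin n, (3 * X + 2 * (((n:ℝ) - 1) * X + 1 / (3 * (n:ℝ)) * Y)) := by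
    calc Y ≤ ∑ j, ‖y j‖ := concat_le_sum y
    _ ≤ _ := Finset.sum_le_sum (fun j _ => by linarith [hny j, hneg j])
  rw [Finset.sum_const, Finset.card_univ, Fintype.card_fin, nsmul_eq_mul] at hYb
  have hkey : (n:ℝ) * (1 / (3 * (n:ℝ))) = 1 / 3 := by field_simp
  have hYb2 : Y ≤ (n:ℝ) * (3 * X + 2 * (((n:ℝ) - 1) * X)) + (2/3) * Y := by
    nlinarith [hYb, hkey]
  nlinarith [hYb2, hX0, hnR]
end
end
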